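/- Let R = F_p[t^{a/2^b} : a, b ∈ ℤ_{>0}] and a the ideal generated by all t^{a/2^b}. Then a is not a pure ideal: there is no y ∈ a with t = y·t. Consequently the quotient R → R/a ≅ F_p is not flat. -/

import Mathlib

/-- The additive monoid of nonnegative dyadic rationals `{a/2^b : a, b ∈ ℕ}`. -/
def dyadicMonoid : AddSubmonoid ℚ :=
  AddSubmonoid.closure (Set.range fun ab : ℕ × ℕ => ((ab.1 : ℚ) / 2 ^ ab.2))

/-- `R = 𝔽_p[t^{a/2^b} : a, b > 0]`, the monoid algebra of the nonnegative dyadic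
rationals over `𝔽_p`. -/
abbrev DyadicRing (p : ℕ) : Type := AddMonoidAlgebra (ZMod p) dyadicMonoid

/-- The ideal `a = (t^{a/2^b} : a, b > 0)` generated by all `t^m` with `m > 0`. -/
noncomputable def dyadicIdeal (p : ℕ) : Ideal (DyadicRing p) :=
  Ideal.span {x | ∃ m : dyadicMonoid, (m : ℚ) ≠ 0 ∧ x = AddMonoidAlgebra.single m 1}

theorem one_mem_dyadicMonoid : (1 : ℚ) ∈ dyadicMonoid :=
  AddSubmonoid.subset_closure ⟨(1, 0), by norm_num⟩

/-- The element `t = t^1` of `DyadicRing p`. -/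
noncomputable def tDyadic (p : ℕ) : DyadicRing p :=
  AddMonoidAlgebra.single ⟨1, one_mem_dyadicMonoid⟩ 1

theorem dyadic_nonneg (m : dyadicMonoid) : 0 ≤ (m : ℚ) := by
  have : dyadicMonoid ≤ AddSubmonoid.nonneg ℚ := by
    rw [dyadicMonoid, AddSubmonoid.closure_le]
    rintro q ⟨⟨a, b⟩, rfl⟩
    show (0 : ℚ) ≤ (a : ℚ) / 2 ^ b
    positivity
  exact this m.2

theorem coeff_zero_eq_zero {p : ℕ} {y : DyadicRing p} (hy : y ∈ dyadicIdeal p) :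
    y.coeff 0 = 0 := by
  refine Submodule.span_induction ?_ rfl (fun a b _ _ ha hb => by
      rw [AddMonoidAlgebra.coeff_add, Finsupp.add_apply, ha, hb, add_zero]) ?_ hy
  · rintro x ⟨m, hm, rfl⟩
    rw [AddMonoidAlgebra.coeff_single]
    exact Finsupp.single_eq_of_ne' (fun h => hm (by simp [h]))
  · intro r x _ hx
    rw [smul_eq_mul, AddMonoidAlgebra.coeff_mul]
    refine Finset.sum_eq_zero fun a _ => Finset.sum_eq_zero fun b _ => ?_
    show (if a + b = 0 then r.coeff a * x.coeff b else 0) = 0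
    split_ifs with h
    · have hb : b = 0 := by
        have := congrArg (fun z : dyadicMonoid => (z : ℚ)) h
        have h1 := dyadic_nonneg a
        have h2 := dyadic_nonneg b
        push_cast at this
        refine Subtype.ext ?_
        simp only [ZeroMemClass.coe_zero]
        linarith
      rw [hb, hx, mul_zero]
    · rfl

/-- in `R = 𝔽_p[t^{a/2^b}]` the augmentation ideal `a` is not pure: there is no
`y ∈ a` with `t = y·t`; consequently `R → R/a` is not flat. -/
theorem stmt_10 (p : ℕ) [Fact p.Prime] :
    (¬ ∃ y ∈ dyadicIdeal p, tDyadic p = y * tDyadic p) ∧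
      ¬ Module.Flat (DyadicRing p) (DyadicRing p ⧸ dyadicIdeal p) := by
  have hp : (1 : ZMod p) ≠ 0 := one_ne_zero
  have key : ¬ ∃ y ∈ dyadicIdeal p, tDyadic p = y * tDyadic p := by
    rintro ⟨y, hy, heq⟩
    have := congrArg (fun z : DyadicRing p => z.coeff ⟨1, one_mem_dyadicMonoid⟩) heq
    simp only [tDyadic] at this
    rw [AddMonoidAlgebra.coeff_mul_single_eq_coeff_mul (x := y) (r := 1) (0 : dyadicMonoid)
      (fun a _ => by
        constructor
        · intro h
          have h' := congrArg (fun z : dyadicMonoid => (z : ℚ)) h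
          push_cast at h'
          have h0 := dyadic_nonneg a
          refine Subtype.ext ?_
          simp only [ZeroMemClass.coe_zero]
          linarith
        · rintro rfl; rw [zero_add])] at this
    rw [AddMonoidAlgebra.coeff_single, Finsupp.single_eq_same, coeff_zero_eq_zero hy, zero_mul] at this
    exact hp this
  refine ⟨key, fun hflat => key ?_⟩
  -- use the equational criterion with the single relation t • 1̄ = 0
  have hrel : ∑ i : Unit, (fun _ => tDyadic p) i •
      (fun _ => (1 : DyadicRing p ⧸ dyadicIdeal p)) i = 0 := by
    have ht : tDyadic p ∈ dyadicIdeal p :=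
      Ideal.subset_span ⟨⟨1, one_mem_dyadicMonoid⟩, by norm_num, rfl⟩
    simp only [Finset.sum_const, Finset.card_univ, Fintype.card_unit, one_smul]
    have h1 : (1 : DyadicRing p ⧸ dyadicIdeal p) = Submodule.Quotient.mk 1 := rfl
    rw [h1, ← Submodule.Quotient.mk_smul, smul_eq_mul, mul_one,
      Submodule.Quotient.mk_eq_zero]
    exact ht
  obtain ⟨κ, a, yv, hx, ha⟩ := Module.Flat.isTrivialRelation_of_sum_smul_eq_zero hrel
  -- choose lifts of the yv j
  choose r hr using fun j : Fin κ => Submodule.Quotient.mk_surjective (dyadicIdeal p) (yv j)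
  set z : DyadicRing p := 1 - ∑ j, a () j * r j with hz
  have h1 := hx ()
  simp only at h1
  have hmk : Submodule.Quotient.mk (∑ j, a () j * r j) =
      (1 : DyadicRing p ⧸ dyadicIdeal p) := by
    calc Submodule.Quotient.mk (∑ j, a () j * r j)
        = ∑ j, a () j • yv j := by
          rw [← Submodule.mkQ_apply, map_sum]
          refine Finset.sum_congr rfl fun j _ => ?_
          rw [Submodule.mkQ_apply, ← hr j, ← Submodule.Quotient.mk_smul, smul_eq_mul]
      _ = 1 := h1.symm
  have hz_mem : z ∈ dyadicIdeal p := by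
    rw [← Submodule.Quotient.mk_eq_zero, hz, Submodule.Quotient.mk_sub, hmk]
    exact sub_eq_zero.mpr rfl
  refine ⟨z, hz_mem, ?_⟩
  have hta : ∀ j, tDyadic p * a () j = 0 := fun j => by simpa using ha j
  have hsum : (∑ j, a () j * r j) * tDyadic p = 0 := by
    rw [Finset.sum_mul]
    refine Finset.sum_eq_zero fun j _ => ?_
    calc a () j * r j * tDyadic p = r j * (tDyadic p * a () j) := by ring
      _ = 0 := by rw [hta j, mul_zero]
  show tDyadic p = (1 - ∑ j, a () j * r j) * tDyadic p
  rw [sub_mul, one_mul, hsum, sub_zero]
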